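/- Every 3-uniform hypergraph on 5 vertices with at least 4 hyperedges contains a Berge cycle of length 4, i.e., there exist four distinct vertices v₁, v₂, v₃, v₄ and four distinct hyperedges h₁, h₂, h₃, h₄ with {vᵢ, v_{i+1}} ⊆ hᵢ (indices mod 4). -/

import Mathlib

set_option maxRecDepth 40000
set_option synthInstance.maxSize 2000
set_option synthInstance.maxHeartbeats 1000000

def BergeCycle (N n : ℕ) (E : Finset (Fin N) → Prop) : Prop :=
  ∃ v : ZMod n → Fin N, Function.Injective v ∧
    ∃ h : ZMod n → Finset (Fin N), Function.Injective h ∧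
      ∀ i : ZMod n, E (h i) ∧ v i ∈ h i ∧ v (i + 1) ∈ h i

/-- Auxiliary predicate: `H` contains the data of a Berge 4-cycle. -/
def BQ (H : Finset (Finset (Fin 5))) : Prop :=
  ∃ e1 ∈ H, ∃ e2 ∈ H, ∃ e3 ∈ H, ∃ e4 ∈ H,
    e1 ≠ e2 ∧ e1 ≠ e3 ∧ e1 ≠ e4 ∧ e2 ≠ e3 ∧ e2 ≠ e4 ∧ e3 ≠ e4 ∧
    ∃ a ∈ e1, ∃ b ∈ e1, ∃ c ∈ e2, ∃ d ∈ e3,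
      b ∈ e2 ∧ c ∈ e3 ∧ d ∈ e4 ∧ a ∈ e4 ∧
      a ≠ b ∧ a ≠ c ∧ a ≠ d ∧ b ≠ c ∧ b ≠ d ∧ c ≠ d

instance : DecidablePred BQ := fun H => by unfold BQ; infer_instance

/-- The ten 3-element subsets of `Fin 5`. -/
def eT : Fin 10 → Finset (Fin 5) :=
  ![{0,1,2},{0,1,3},{0,1,4},{0,2,3},{0,2,4},{0,3,4},{1,2,3},{1,2,4},{1,3,4},{2,3,4}]

theorem eT_inj : Function.Injective eT := by decide

theorem exists_idx : ∀ s : Finset (Fin 5), s.card = 3 → ∃ j : Fin 10, s = eT j := by decide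

set_option maxHeartbeats 8000000 in
theorem key : ∀ i1 i2 i3 i4 : Fin 10, i1 < i2 → i2 < i3 → i3 < i4 →
    BQ {eT i1, eT i2, eT i3, eT i4} := by decide

theorem sort4 (J : Finset (Fin 10)) (h : J.card = 4) :
    ∃ k1 k2 k3 k4 : Fin 10, k1 < k2 ∧ k2 < k3 ∧ k3 < k4 ∧ J = {k1,k2,k3,k4} := by
  have hs := (Finset.sortedLT_sort J).pairwise
  have hl : (J.sort (·≤·)).length = 4 := by rw [Finset.length_sort]; exact h
  have ht : (J.sort (·≤·)).toFinset = J := Finset.sort_toFinset J _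
  match hL : J.sort (·≤·), hl with
  | [k1,k2,k3,k4], _ =>
    rw [hL] at hs ht
    simp [List.pairwise_cons] at hs
    refine ⟨k1,k2,k3,k4, hs.1.1, hs.2.1.1, hs.2.2, ?_⟩
    rw [← ht]; simp

theorem build (E : Finset (Fin 5) → Prop) (e1 e2 e3 e4 : Finset (Fin 5)) (a b c d : Fin 5)
    (hE1 : E e1) (hE2 : E e2) (hE3 : E e3) (hE4 : E e4)
    (h12 : e1 ≠ e2) (h13 : e1 ≠ e3) (h14 : e1 ≠ e4) (h23 : e2 ≠ e3) (h24 : e2 ≠ e4) (h34 : e3 ≠ e4)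
    (ha1 : a ∈ e1) (hb1 : b ∈ e1) (hc2 : c ∈ e2) (hd3 : d ∈ e3)
    (hb2 : b ∈ e2) (hc3 : c ∈ e3) (hd4 : d ∈ e4) (ha4 : a ∈ e4)
    (hab : a ≠ b) (hac : a ≠ c) (had : a ≠ d) (hbc : b ≠ c) (hbd : b ≠ d) (hcd : c ≠ d) :
    BergeCycle 5 4 E := by
  refine ⟨fun i => ![a,b,c,d] i, ?_, fun i => ![e1,e2,e3,e4] i, ?_, ?_⟩
  · intro x y hxy; fin_cases x <;> fin_cases y <;> simp_all <;> rfl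
  · intro x y hxy; fin_cases x <;> fin_cases y <;> simp_all <;> rfl
  · intro i; fin_cases i <;> exact ⟨by assumption, by assumption, by assumption⟩

/-- Every 3-uniform hypergraph on 5 vertices with at least 4 hyperedges
contains a Berge cycle of length 4. -/
theorem stmt1 (H : Finset (Finset (Fin 5))) (hu : ∀ s ∈ H, s.card = 3)
    (hc : 4 ≤ H.card) : BergeCycle 5 4 (· ∈ H) := by
  obtain ⟨H', hsub, hcard⟩ := Finset.exists_subset_card_eq hc
  set J : Finset (Fin 10) := Finset.univ.filter (fun j => eT j ∈ H') with hJ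
  have himg : J.image eT = H' := by
    ext s
    simp only [Finset.mem_image, hJ, Finset.mem_filter, Finset.mem_univ, true_and]
    constructor
    · rintro ⟨j, hj, rfl⟩; exact hj
    · intro hs
      obtain ⟨j, rfl⟩ := exists_idx s (hu s (hsub hs))
      exact ⟨j, hs, rfl⟩
  have hJcard : J.card = 4 := by
    have := Finset.card_image_of_injective J eT_inj
    rw [himg, hcard] at this; omega
  obtain ⟨k1, k2, k3, k4, h12, h23, h34, hJeq⟩ := sort4 J hJcard
  have hH' : H' = {eT k1, eT k2, eT k3, eT k4} := by
    rw [← himg, hJeq]; simp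
  have hq : BQ H' := by rw [hH']; exact key k1 k2 k3 k4 h12 h23 h34
  obtain ⟨e1, he1, e2, he2, e3, he3, e4, he4, n12, n13, n14, n23, n24, n34,
    a, ha1, b, hb1, c, hc2, d, hd3, hb2, hc3, hd4, ha4,
    hab, hac, had, hbc, hbd, hcd⟩ := hq
  exact build (· ∈ H) e1 e2 e3 e4 a b c d
    (hsub he1) (hsub he2) (hsub he3) (hsub he4)
    n12 n13 n14 n23 n24 n34 ha1 hb1 hc2 hd3 hb2 hc3 hd4 ha4
    hab hac had hbc hbd hcd
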